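/- arXiv:1011.5759 — 2 statements merged into one kernel-verified Lean document; each statement's English description precedes it below -/
import Mathlib

section
/- Let V = ⊕_{i∈I} V_i and W = ⊕_{i∈I} W_i be I-graded vector spaces, let x : V → V be a graded linear map of degree +1 and x̄ : V → V a graded linear map of degree −1 with x ∘ x̄ = x̄ ∘ x, and let t : V → W be a graded linear map of degree 0. Assume stability: the only I-graded subspace S ⊆ V with x(S) ⊆ S, x̄(S) ⊆ S and t(S) = 0 is S = 0. Set N := ker x. Then N is an I-graded subspace with x̄(N) ⊆ N; let x', x̄' be the graded maps induced on V/N and let t' : V/N → W be the degree +1 graded map induced by t ∘ x (well-defined since (t ∘ x)(N) = 0). Then x' ∘ x̄' = x̄' ∘ x', and the only I-graded subspace S' ⊆ V/N with x'(S') ⊆ S', x̄'(S') ⊆ S' and t'(S') = 0 is S' = 0. -/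
section aux

variable {ι : Type*} [Fintype ι] [DecidableEq ι] {M : Type*} [AddCommGroup M] [Module ℂ M]

lemma aux_mem_iSup {p : ι → Submodule ℂ M} {v : M} (h : v ∈ ⨆ i, p i) :
    ∃ c : ι → M, (∀ i, c i ∈ p i) ∧ ∑ i, c i = v := by
  obtain ⟨f, hf, hs⟩ := (Submodule.mem_iSup_iff_exists_finsupp p v).mp h
  refine ⟨f, hf, ?_⟩
  rw [← hs, Finsupp.sum_fintype]
  intro i; rfl

lemma aux_eq_zero {p : ι → Submodule ℂ M} (hp : DirectSum.IsInternal p)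
    {c : ι → M} (hc : ∀ i, c i ∈ p i) (hsum : ∑ i, c i = 0) (i : ι) : c i = 0 := by
  set d : DirectSum ι fun i => p i := ∑ j, DirectSum.of (fun j => p j) j ⟨c j, hc j⟩ with hd
  have h1 : DirectSum.coeAddMonoidHom p d = 0 := by
    rw [hd, map_sum]
    simpa using hsum
  have h2 : d = 0 := hp.injective (by rw [map_zero]; exact h1)
  have h3 := DFunLike.congr_fun h2 i
  rw [hd, DFinsupp.finset_sum_apply] at h3
  rw [Finset.sum_eq_single i] at h3
  · rw [DirectSum.of_eq_same] at h3
    exact (congrArg Subtype.val h3).trans rfl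
  · intro j _ hj
    exact DirectSum.of_eq_of_ne _ _ _ hj.symm
  · simp

end aux

/-- Stability descent in the proof of Theorem 5.4(1): stability of `(x + x̄, t)` passes
to the induced point on `V / ker x` with framing map induced by `t ∘ x`. -/
theorem stmt7 (n : ℕ) (hn : 1 ≤ n)
    (V W : Type*) [AddCommGroup V] [Module ℂ V] [AddCommGroup W] [Module ℂ W]
    [FiniteDimensional ℂ V] [FiniteDimensional ℂ W]
    (Vgr : ZMod (n + 1) → Submodule ℂ V) (Wgr : ZMod (n + 1) → Submodule ℂ W)
    (hV : DirectSum.IsInternal Vgr) (hW : DirectSum.IsInternal Wgr)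
    (x xbar : V →ₗ[ℂ] V) (t : V →ₗ[ℂ] W)
    (hx : ∀ i, (Vgr i).map x ≤ Vgr (i + 1))
    (hxbar : ∀ i, (Vgr i).map xbar ≤ Vgr (i - 1))
    (ht : ∀ i, (Vgr i).map t ≤ Wgr i)
    (hcomm : x ∘ₗ xbar = xbar ∘ₗ x)
    (hstab : ∀ S : Submodule ℂ V, (S = ⨆ i, S ⊓ Vgr i) →
      S.map x ≤ S → S.map xbar ≤ S → S.map t = ⊥ → S = ⊥)
    (N : Submodule ℂ V) (hN : N = LinearMap.ker x) :
    (N = ⨆ i, N ⊓ Vgr i) ∧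
    N.map xbar ≤ N ∧
    (N.map (t ∘ₗ x) = ⊥) ∧
    ∃ (x' xbar' : (V ⧸ N) →ₗ[ℂ] (V ⧸ N)) (t' : (V ⧸ N) →ₗ[ℂ] W),
      (∀ v : V, x' (N.mkQ v) = N.mkQ (x v)) ∧
      (∀ v : V, xbar' (N.mkQ v) = N.mkQ (xbar v)) ∧
      (∀ v : V, t' (N.mkQ v) = t (x v)) ∧
      x' ∘ₗ xbar' = xbar' ∘ₗ x' ∧
      (∀ S' : Submodule ℂ (V ⧸ N), (S' = ⨆ i, S' ⊓ (Vgr i).map N.mkQ) →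
        S'.map x' ≤ S' → S'.map xbar' ≤ S' → S'.map t' = ⊥ → S' = ⊥) := by
  classical
  -- every vector decomposes into graded components
  have hdec : ∀ v : V, ∃ c : ZMod (n + 1) → V, (∀ i, c i ∈ Vgr i) ∧ ∑ i, c i = v := by
    intro v
    exact aux_mem_iSup (by rw [hV.submodule_iSup_eq_top]; trivial)
  -- graded components of an element of the kernel are in the kernel
  have hkerdec : ∀ v ∈ N, ∃ c : ZMod (n + 1) → V,
      (∀ i, c i ∈ Vgr i ∧ c i ∈ N) ∧ ∑ i, c i = v := by
    intro v hv
    obtain ⟨c, hc, hcs⟩ := hdec v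
    have hxc : ∀ i, x (c i) = 0 := by
      have hzero : ∑ j, x (c (j - 1)) = 0 := by
        rw [← Equiv.sum_comp (Equiv.addRight (1 : ZMod (n+1))) (fun j => x (c (j - 1)))]
        simp only [Equiv.coe_addRight, add_sub_cancel_right]
        rw [← map_sum, hcs]
        rw [hN] at hv; exact hv
      intro i
      have := aux_eq_zero hV (c := fun j => x (c (j - 1)))
        (fun j => by
          have h := hx (j - 1) ⟨c (j - 1), hc _, rfl⟩
          rwa [sub_add_cancel] at h) hzero (i + 1)
      simpa using this
    exact ⟨c, fun i => ⟨hc i, by rw [hN]; exact hxc i⟩, hcs⟩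
  have hNgr : N = ⨆ i, N ⊓ Vgr i := by
    refine le_antisymm ?_ (iSup_le fun i => inf_le_left)
    intro v hv
    obtain ⟨c, hc, hcs⟩ := hkerdec v hv
    rw [← hcs]
    exact Submodule.sum_mem _ fun i _ =>
      Submodule.mem_iSup_of_mem i (Submodule.mem_inf.mpr ⟨(hc i).2, (hc i).1⟩)
  have hxN : ∀ v ∈ N, x v ∈ N := by
    intro v hv; rw [hN] at hv ⊢
    simp [LinearMap.mem_ker.mp hv]
  have hxbarN : N.map xbar ≤ N := by
    rintro _ ⟨v, hv, rfl⟩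
    rw [hN] at hv ⊢
    have := LinearMap.congr_fun hcomm v
    simp only [LinearMap.coe_comp, Function.comp_apply] at this
    simp [LinearMap.mem_ker, this, LinearMap.mem_ker.mp hv]
  have htx : N.map (t ∘ₗ x) = ⊥ := by
    rw [Submodule.eq_bot_iff]
    rintro _ ⟨v, hv, rfl⟩
    rw [hN] at hv
    simp [LinearMap.mem_ker.mp hv]
  refine ⟨hNgr, hxbarN, htx, ?_⟩
  have hxle : N ≤ N.comap x := fun v hv => hxN v hv
  have hxbarle : N ≤ N.comap xbar := fun v hv => hxbarN ⟨v, hv, rfl⟩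
  set x' : (V ⧸ N) →ₗ[ℂ] (V ⧸ N) := Submodule.mapQ N N x hxle with hx'
  set xbar' : (V ⧸ N) →ₗ[ℂ] (V ⧸ N) := Submodule.mapQ N N xbar hxbarle with hxbar'
  have hker : N ≤ LinearMap.ker (t ∘ₗ x) := by
    intro v hv; rw [hN] at hv; simp [LinearMap.mem_ker.mp hv]
  set t' : (V ⧸ N) →ₗ[ℂ] W := N.liftQ (t ∘ₗ x) hker with ht'
  have hx'app : ∀ v : V, x' (N.mkQ v) = N.mkQ (x v) := fun v => rfl
  have hxbar'app : ∀ v : V, xbar' (N.mkQ v) = N.mkQ (xbar v) := fun v => rfl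
  have ht'app : ∀ v : V, t' (N.mkQ v) = t (x v) := fun v => rfl
  refine ⟨x', xbar', t', hx'app, hxbar'app, ht'app, ?_, ?_⟩
  · apply Submodule.linearMap_qext
    ext v
    simp only [LinearMap.coe_comp, Function.comp_apply, hx'app, hxbar'app]
    have := LinearMap.congr_fun hcomm v
    simp only [LinearMap.coe_comp, Function.comp_apply] at this
    rw [this]
  · intro S' hS'gr hS'x hS'xbar hS't
    set S : Submodule ℂ V := S'.comap N.mkQ with hS
    -- membership transfer
    have hmem : ∀ v : V, v ∈ S ↔ N.mkQ v ∈ S' := fun v => Iff.rfl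
    -- S decomposes with graded pieces in S
    have hSdec : ∀ v ∈ S, ∃ c : ZMod (n + 1) → V,
        (∀ i, c i ∈ S ⊓ Vgr i) ∧ ∑ i, c i = v := by
      intro v hv
      have hv' : N.mkQ v ∈ ⨆ i, S' ⊓ (Vgr i).map N.mkQ := by
        rw [← hS'gr]; exact hv
      obtain ⟨w, hw, hws⟩ := aux_mem_iSup hv'
      choose u hu1 hu2 using fun i => ((Submodule.mem_inf.mp (hw i)).2 : _)
      have hn' : v - ∑ i, u i ∈ N := by
        have hq : N.mkQ (v - ∑ i, u i) = 0 := by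
          rw [map_sub, map_sum, Finset.sum_congr rfl (fun i _ => hu2 i), hws, sub_self]
        rw [← Submodule.ker_mkQ N]
        exact LinearMap.mem_ker.mpr hq
      obtain ⟨m, hm, hms⟩ := hkerdec _ hn'
      refine ⟨fun i => u i + m i, fun i => Submodule.mem_inf.mpr ⟨?_, ?_⟩, ?_⟩
      · rw [hmem, map_add]
        have hmi : N.mkQ (m i) = 0 := (Submodule.Quotient.mk_eq_zero N).mpr (hm i).2
        rw [hmi, add_zero, hu2 i]
        exact (Submodule.mem_inf.mp (hw i)).1
      · exact Submodule.add_mem _ (hu1 i) (hm i).1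
      · rw [Finset.sum_add_distrib, hms]
        abel
    have hxS : ∀ v ∈ S, x v ∈ S := by
      intro v hv
      rw [hmem, ← hx'app]
      exact hS'x ⟨N.mkQ v, hv, rfl⟩
    have hxbarS : ∀ v ∈ S, xbar v ∈ S := by
      intro v hv
      rw [hmem, ← hxbar'app]
      exact hS'xbar ⟨N.mkQ v, hv, rfl⟩
    -- apply stability to T = x(S)
    set T : Submodule ℂ V := S.map x with hT
    have hTS : T ≤ S := by rintro _ ⟨v, hv, rfl⟩; exact hxS v hv
    have hTgr : T = ⨆ i, T ⊓ Vgr i := by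
      refine le_antisymm ?_ (iSup_le fun i => inf_le_left)
      rintro _ ⟨v, hv, rfl⟩
      obtain ⟨c, hc, hcs⟩ := hSdec v hv
      rw [← hcs, map_sum]
      refine Submodule.sum_mem _ fun i _ => Submodule.mem_iSup_of_mem (i + 1) ?_
      refine Submodule.mem_inf.mpr ⟨⟨c i, (Submodule.mem_inf.mp (hc i)).1, rfl⟩, ?_⟩
      exact hx i ⟨c i, (Submodule.mem_inf.mp (hc i)).2, rfl⟩
    have hTx : T.map x ≤ T := by
      rintro _ ⟨_, ⟨v, hv, rfl⟩, rfl⟩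
      exact ⟨x v, hxS v hv, rfl⟩
    have hTxbar : T.map xbar ≤ T := by
      rintro _ ⟨_, ⟨v, hv, rfl⟩, rfl⟩
      have hc := LinearMap.congr_fun hcomm (v)
      simp only [LinearMap.coe_comp, Function.comp_apply] at hc
      exact ⟨xbar v, hxbarS v hv, hc⟩
    have hTt : T.map t = ⊥ := by
      rw [Submodule.eq_bot_iff]
      rintro _ ⟨_, ⟨v, hv, rfl⟩, rfl⟩
      have : t' (N.mkQ v) ∈ S'.map t' := ⟨N.mkQ v, hv, rfl⟩
      rw [hS't] at this
      rw [ht'app] at this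
      simpa using this
    have hTbot : T = ⊥ := hstab T hTgr hTx hTxbar hTt
    have hSN : S ≤ N := by
      intro v hv
      rw [hN, LinearMap.mem_ker]
      have : x v ∈ T := ⟨v, hv, rfl⟩
      rw [hTbot] at this
      simpa using this
    have : S' = S.map N.mkQ :=
      (Submodule.map_comap_eq_of_surjective (Submodule.mkQ_surjective N) S').symm
    rw [this, Submodule.eq_bot_iff]
    rintro _ ⟨v, hv, rfl⟩
    have := hSN hv
    rw [← Submodule.ker_mkQ N, LinearMap.mem_ker] at this
    simpa using this
end

section
/- Let V = ⊕_{i∈I} V_i and W = ⊕_{i∈I} W_i be I-graded vector spaces, let x : V → V be a graded linear map of degree +1 and x̄ : V → V a graded linear map of degree −1 with x ∘ x̄ = x̄ ∘ x, and let t : V → W be a graded linear map of degree 0. Assume stability: the only I-graded subspace S ⊆ V with x(S) ⊆ S, x̄(S) ⊆ S and t(S) = 0 is S = 0. Set N̄ := ker x̄. Then N̄ is an I-graded subspace with x(N̄) ⊆ N̄; let x', x̄' be the graded maps induced on V/N̄ and let t' : V/N̄ → W be the degree −1 graded map induced by t ∘ x̄ (well-defined since (t ∘ x̄)(N̄) =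 0). Then x' ∘ x̄' = x̄' ∘ x', and the only I-graded subspace S' ⊆ V/N̄ with x'(S') ⊆ S', x̄'(S') ⊆ S' and t'(S') = 0 is S' = 0. -/
/-- Stability descent in the proof of Theorem 5.4(2): stability of `(x + x̄, t)` passes
to the induced point on `V / ker x̄` with framing map induced by `t ∘ x̄`. -/
theorem stmt8 (n : ℕ) (hn : 1 ≤ n)
    (V W : Type*) [AddCommGroup V] [Module ℂ V] [AddCommGroup W] [Module ℂ W]
    [FiniteDimensional ℂ V] [FiniteDimensional ℂ W]
    (Vgr : ZMod (n + 1) → Submodule ℂ V) (Wgr : ZMod (n + 1) → Submodule ℂ W)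
    (hV : DirectSum.IsInternal Vgr) (hW : DirectSum.IsInternal Wgr)
    (x xbar : V →ₗ[ℂ] V) (t : V →ₗ[ℂ] W)
    (hx : ∀ i, (Vgr i).map x ≤ Vgr (i + 1))
    (hxbar : ∀ i, (Vgr i).map xbar ≤ Vgr (i - 1))
    (ht : ∀ i, (Vgr i).map t ≤ Wgr i)
    (hcomm : x ∘ₗ xbar = xbar ∘ₗ x)
    (hstab : ∀ S : Submodule ℂ V, (S = ⨆ i, S ⊓ Vgr i) →
      S.map x ≤ S → S.map xbar ≤ S → S.map t = ⊥ → S = ⊥)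
    (Nbar : Submodule ℂ V) (hNbar : Nbar = LinearMap.ker xbar) :
    (Nbar = ⨆ i, Nbar ⊓ Vgr i) ∧
    Nbar.map x ≤ Nbar ∧
    (Nbar.map (t ∘ₗ xbar) = ⊥) ∧
    ∃ (x' xbar' : (V ⧸ Nbar) →ₗ[ℂ] (V ⧸ Nbar)) (t' : (V ⧸ Nbar) →ₗ[ℂ] W),
      (∀ v : V, x' (Nbar.mkQ v) = Nbar.mkQ (x v)) ∧
      (∀ v : V, xbar' (Nbar.mkQ v) = Nbar.mkQ (xbar v)) ∧
      (∀ v : V, t' (Nbar.mkQ v) = t (xbar v)) ∧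
      x' ∘ₗ xbar' = xbar' ∘ₗ x' ∧
      (∀ S' : Submodule ℂ (V ⧸ Nbar), (S' = ⨆ i, S' ⊓ (Vgr i).map Nbar.mkQ) →
        S'.map x' ≤ S' → S'.map xbar' ≤ S' → S'.map t' = ⊥ → S' = ⊥) := by
  classical
  subst hNbar
  set Nbar := LinearMap.ker xbar with hNbar
  letI : DirectSum.Decomposition Vgr := hV.chooseDecomposition
  -- projection onto the `j`-th graded component, as a linear map
  set P : ZMod (n + 1) → (V →ₗ[ℂ] V) := fun j =>
    (Vgr j).subtype ∘ₗ (DirectSum.component ℂ (ZMod (n + 1)) (fun i => ↥(Vgr i)) j) ∘ₗ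
      (DirectSum.decomposeLinearEquiv Vgr).toLinearMap with hP
  have hPapply : ∀ (j : ZMod (n + 1)) (v : V), P j v = (DirectSum.decompose Vgr v j : V) :=
    fun j v => rfl
  have hPmem : ∀ (j : ZMod (n + 1)) (v : V), P j v ∈ Vgr j := by
    intro j v; rw [hPapply]; exact (DirectSum.decompose Vgr v j).2
  -- sum of components recovers the element
  have hsum : ∀ v : V, ∑ i : ZMod (n + 1), P i v = v := by
    intro v
    have h1 := DirectSum.sum_support_decompose Vgr v
    calc ∑ i : ZMod (n + 1), P i v
        = ∑ i ∈ (DirectSum.decompose Vgr v).support, ((DirectSum.decompose Vgr v i : V)) := by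
          refine (Finset.sum_subset (Finset.subset_univ _) ?_).symm
          intro i _ hi
          rw [hPapply, DFinsupp.notMem_support_iff.mp hi, ZeroMemClass.coe_zero]
      _ = v := h1
  -- components of a kernel element are in the kernel
  have hker : ∀ v : V, xbar v = 0 → ∀ i₀ : ZMod (n + 1), xbar (P i₀ v) = 0 := by
    intro v hv i₀
    have hmem : ∀ i : ZMod (n + 1), xbar (P i v) ∈ Vgr (i - 1) := by
      intro i
      exact hxbar i ⟨_, hPmem i v, rfl⟩
    have hsum0 : ∑ i : ZMod (n + 1), xbar (P i v) = 0 := by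
      rw [← map_sum, hsum v, hv]
    have key : ∑ i : ZMod (n + 1), P (i₀ - 1) (xbar (P i v)) = 0 := by
      rw [← map_sum (P (i₀ - 1)) _ Finset.univ, hsum0, map_zero]
    rw [Finset.sum_eq_single i₀] at key
    · rw [hPapply, DirectSum.decompose_of_mem_same Vgr (hmem i₀)] at key
      exact key
    · intro i _ hi
      rw [hPapply]
      refine DirectSum.decompose_of_mem_ne Vgr (hmem i) ?_
      intro h
      exact hi (sub_left_inj.mp h)
    · intro h; exact absurd (Finset.mem_univ i₀) h
  have hNgr : Nbar = ⨆ i, Nbar ⊓ Vgr i := by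
    refine le_antisymm ?_ (iSup_le fun i => inf_le_left)
    intro v hv
    rw [← hsum v]
    refine Submodule.sum_mem _ fun i _ => ?_
    refine Submodule.mem_iSup_of_mem i ⟨?_, hPmem i v⟩
    exact LinearMap.mem_ker.mpr (hker v (LinearMap.mem_ker.mp hv) i)
  have hNx : Nbar.map x ≤ Nbar := by
    rintro _ ⟨v, hv, rfl⟩
    have hcv := LinearMap.congr_fun hcomm v
    simp only [LinearMap.comp_apply] at hcv
    rw [LinearMap.mem_ker, ← hcv, LinearMap.mem_ker.mp hv, map_zero]
  have hNt : Nbar.map (t ∘ₗ xbar) = ⊥ := by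
    rw [Submodule.eq_bot_iff]
    rintro _ ⟨v, hv, rfl⟩
    simp [LinearMap.mem_ker.mp hv]
  refine ⟨hNgr, hNx, hNt, ?_⟩
  have hxle : Nbar ≤ Nbar.comap x := fun v hv => hNx ⟨v, hv, rfl⟩
  have hxbarle : Nbar ≤ Nbar.comap xbar := by
    intro v hv
    simp [Submodule.mem_comap, LinearMap.mem_ker.mp hv]
  have htle : Nbar ≤ LinearMap.ker (t ∘ₗ xbar) := by
    intro v hv
    simp [LinearMap.mem_ker.mp hv]
  set x' : (V ⧸ Nbar) →ₗ[ℂ] (V ⧸ Nbar) := Nbar.mapQ Nbar x hxle with hx'def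
  set xbar' : (V ⧸ Nbar) →ₗ[ℂ] (V ⧸ Nbar) := Nbar.mapQ Nbar xbar hxbarle with hxbar'def
  set t' : (V ⧸ Nbar) →ₗ[ℂ] W := Nbar.liftQ (t ∘ₗ xbar) htle with ht'def
  have hx'app : ∀ v : V, x' (Nbar.mkQ v) = Nbar.mkQ (x v) := by
    intro v; rw [hx'def, Submodule.mkQ_apply, Submodule.mapQ_apply, Submodule.mkQ_apply]
  have hxbar'app : ∀ v : V, xbar' (Nbar.mkQ v) = Nbar.mkQ (xbar v) := by
    intro v; rw [hxbar'def, Submodule.mkQ_apply, Submodule.mapQ_apply, Submodule.mkQ_apply]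
  have ht'app : ∀ v : V, t' (Nbar.mkQ v) = t (xbar v) := by
    intro v; rw [ht'def, Submodule.mkQ_apply, Submodule.liftQ_apply, LinearMap.comp_apply]
  refine ⟨x', xbar', t', hx'app, hxbar'app, ht'app, ?_, ?_⟩
  · refine Submodule.linearMap_qext _ ?_
    ext v
    simp only [LinearMap.comp_apply]
    rw [hxbar'app, hx'app, hx'app, hxbar'app]
    exact congrArg Nbar.mkQ (LinearMap.congr_fun hcomm v)
  · intro S' hgr hxS hxbarS htS
    set U : ZMod (n + 1) → Submodule ℂ V := fun i => (S'.comap Nbar.mkQ) ⊓ Vgr i with hU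
    set T : Submodule ℂ V := ⨆ i, (U i).map xbar with hT
    have hUmk : ∀ i, ∀ v ∈ U i, Nbar.mkQ v ∈ S' := fun i v hv => hv.1
    have hTbot : T = ⊥ := by
      refine hstab T ?_ ?_ ?_ ?_
      · refine le_antisymm ?_ (iSup_le fun j => inf_le_left)
        refine iSup_le fun i => ?_
        have h1 : (U i).map xbar ≤ T ⊓ Vgr (i - 1) :=
          le_inf (le_iSup (fun i => (U i).map xbar) i)
            ((Submodule.map_mono inf_le_right).trans (hxbar i))
        exact h1.trans (le_iSup (fun j => T ⊓ Vgr j) (i - 1))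
      · rw [hT, Submodule.map_iSup]
        refine iSup_le fun i => ?_
        rintro _ ⟨_, ⟨v, hv, rfl⟩, rfl⟩
        have h1 : x (xbar v) = xbar (x v) := LinearMap.congr_fun hcomm v
        have h2 : x v ∈ U (i + 1) := by
          refine ⟨?_, hx i ⟨v, hv.2, rfl⟩⟩
          have hm : x' (Nbar.mkQ v) ∈ S' := hxS ⟨Nbar.mkQ v, hUmk i v hv, rfl⟩
          rw [hx'app v] at hm
          exact Submodule.mem_comap.mpr hm
        rw [h1]
        exact le_iSup (fun i => (U i).map xbar) (i + 1) ⟨x v, h2, rfl⟩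
      · rw [hT, Submodule.map_iSup]
        refine iSup_le fun i => ?_
        rintro _ ⟨_, ⟨v, hv, rfl⟩, rfl⟩
        have h2 : xbar v ∈ U (i - 1) := by
          refine ⟨?_, hxbar i ⟨v, hv.2, rfl⟩⟩
          have hm : xbar' (Nbar.mkQ v) ∈ S' := hxbarS ⟨Nbar.mkQ v, hUmk i v hv, rfl⟩
          rw [hxbar'app v] at hm
          exact Submodule.mem_comap.mpr hm
        exact le_iSup (fun i => (U i).map xbar) (i - 1) ⟨xbar v, h2, rfl⟩
      · rw [Submodule.eq_bot_iff]
        have hsub : T ≤ LinearMap.ker t := by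
          rw [hT]
          refine iSup_le fun i => ?_
          rintro _ ⟨v, hv, rfl⟩
          have hm : t' (Nbar.mkQ v) ∈ S'.map t' := ⟨Nbar.mkQ v, hUmk i v hv, rfl⟩
          rw [htS, Submodule.mem_bot] at hm
          rw [ht'app v] at hm
          exact LinearMap.mem_ker.mpr hm
        rintro _ ⟨w, hw, rfl⟩
        exact LinearMap.mem_ker.mp (hsub hw)
    rw [hgr]
    refine (iSup_le fun i => ?_).antisymm bot_le
    rintro s' ⟨hs1, v, hv, rfl⟩
    have hvU : v ∈ U i := ⟨Submodule.mem_comap.mpr hs1, hv⟩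
    have hvT : xbar v ∈ T := le_iSup (fun i => (U i).map xbar) i ⟨v, hvU, rfl⟩
    rw [hTbot, Submodule.mem_bot] at hvT
    have hvN : v ∈ Nbar := LinearMap.mem_ker.mpr hvT
    rw [Submodule.mem_bot, Submodule.mkQ_apply]
    exact (Submodule.Quotient.mk_eq_zero Nbar).mpr hvN
end
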